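/- Let v : [0,π] → ℂ be continuous, α ∈ ℝ, and let λ ∈ ℂ with λ ≠ 0 and sin(λπ/2) ≠ 0. Define y(x) = −(1/(2λ sin(πλ/2)))·[ ∫₀^x cos λ(π/2 − x + t) v(t) dt + ∫ₓ^π cos λ(π/2 − t + x) v(t) dt ]. Then (1 + α·∫₀^π y(x) conj(v(x)) dx)·Δ(0,λ) = Δ(α,λ). -/

import Mathlib

open MeasureTheory intervalIntegral

/-- Fourier transform `ṽ(λ) = ∫₀^π e^{-iλx} v(x) dx`. -/
noncomputable def ftilde (v : ℝ → ℂ) (l : ℂ) : ℂ :=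
  ∫ x in (0:ℝ)..Real.pi, Complex.exp (-Complex.I * l * x) * v x

/-- `Φ(λ) = ∫₀^π (∫₀^x e^{-iλ(x−t)} conj(v(t)) dt) v(x) dx`. -/
noncomputable def PhiFun (v : ℝ → ℂ) (l : ℂ) : ℂ :=
  ∫ x in (0:ℝ)..Real.pi,
    (∫ t in (0:ℝ)..x, Complex.exp (-Complex.I * l * (x - t)) * (starRingEnd ℂ) (v t)) * v x

/-- `Δ(0,λ) = 2(1 − cos πλ)`. -/
noncomputable def Delta0 (l : ℂ) : ℂ := 2 * (1 - Complex.cos (Real.pi * l))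

/-- `R(λ) = (1 − e^{-iλπ})(Φ(λ)(1 − e^{iλπ}) − ṽ(λ)ṽ*(λ))`. -/
noncomputable def Rfun (v : ℝ → ℂ) (l : ℂ) : ℂ :=
  (1 - Complex.exp (-Complex.I * l * Real.pi)) *
    (PhiFun v l * (1 - Complex.exp (Complex.I * l * Real.pi))
      - ftilde v l * (starRingEnd ℂ) (ftilde v ((starRingEnd ℂ) l)))

/-- `Δ(α,λ) = Δ(0,λ) + (α/(2iλ))(R(λ) − R(−λ))`. -/
noncomputable def DeltaA (v : ℝ → ℂ) (α : ℝ) (l : ℂ) : ℂ :=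
  Delta0 l + ((α : ℂ) / (2 * Complex.I * l)) * (Rfun v l - Rfun v (-l))

/-- The resolvent of `L₀y = −y''` with periodic boundary conditions applied to `v`. -/
noncomputable def resolventFun (v : ℝ → ℂ) (l : ℂ) (x : ℝ) : ℂ :=
  -(1 / (2 * l * Complex.sin ((Real.pi : ℂ) * l / 2))) *
    ((∫ t in (0:ℝ)..x, Complex.cos (l * ((Real.pi : ℂ) / 2 - x + t)) * v t)
      + ∫ t in x..Real.pi, Complex.cos (l * ((Real.pi : ℂ) / 2 - t + x)) * v t)

noncomputable section
namespace Aux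
open Set Complex

local notation "π" => Real.pi

lemma key_exp (Q X T : ℂ) :
    (-4) * I * ((Complex.exp (-Q) - Complex.exp Q) * I / 2) *
      ((Complex.exp (Q + T - X) + Complex.exp (-(Q + T - X))) / 2)
    = (1 - Complex.exp (Q + Q)) * Complex.exp (T - X)
      - (1 - Complex.exp (-(Q + Q))) * Complex.exp (X - T) := by
  have h1 : ∀ u e : ℂ, (-4) * I * (u * I / 2) * e = 2 * u * e := by
    intro u e
    linear_combination (-2 * u * e) * Complex.I_mul_I
  rw [h1]
  simp only [Complex.exp_add, Complex.exp_sub, Complex.exp_neg]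
  have ha := Complex.exp_ne_zero Q
  have hb := Complex.exp_ne_zero X
  have hc := Complex.exp_ne_zero T
  generalize Complex.exp Q = a at *
  generalize Complex.exp X = b at *
  generalize Complex.exp T = c at *
  field_simp
  ring_nf

lemma scalar (l : ℂ) (x t : ℝ) :
    (-4) * I * Complex.sin (l * π / 2) * Complex.cos (l * ((π : ℂ) / 2 - x + t))
    = (1 - Complex.exp (I * l * π)) * Complex.exp (-I * l * (x - t))
      - (1 - Complex.exp (-(I * l * π))) * Complex.exp (-I * l * (t - x)) := by
  have h := key_exp (I * l * ((π : ℂ) / 2)) (I * l * x) (I * l * t)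
  rw [Complex.sin, Complex.cos]
  rw [show -(l * (π : ℂ) / 2) * I = -(I * l * ((π : ℂ) / 2)) by ring,
      show (l * (π : ℂ) / 2) * I = I * l * ((π : ℂ) / 2) by ring,
      show (l * ((π : ℂ) / 2 - x + t)) * I
        = I * l * ((π : ℂ) / 2) + I * l * t - I * l * x by ring,
      show -(l * ((π : ℂ) / 2 - x + t)) * I
        = -(I * l * ((π : ℂ) / 2) + I * l * t - I * l * x) by ring,
      show I * l * (π : ℂ) = I * l * ((π : ℂ) / 2) + I * l * ((π : ℂ) / 2) by ring,
      show -(I * l * ((π : ℂ) / 2) + I * l * ((π : ℂ) / 2))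
        = -(I * l * ((π : ℂ) / 2) + I * l * ((π : ℂ) / 2)) from rfl,
      show -I * l * ((x : ℂ) - t) = I * l * t - I * l * x by ring,
      show -I * l * ((t : ℂ) - x) = I * l * x - I * l * t by ring]
  exact h

lemma hDelta (l : ℂ) : (2 : ℂ) * (1 - Complex.cos ((π : ℂ) * l)) = 4 * Complex.sin (l * π / 2) ^ 2 := by
  rw [show ((π : ℂ) * l) = 2 * (l * π / 2) by ring, Complex.cos_two_mul]
  linear_combination (-4 : ℂ) * Complex.sin_sq_add_cos_sq (l * (π : ℂ) / 2)





lemma tri_swap (F : ℝ → ℝ → ℂ) (hF : Continuous (Function.uncurry F)) :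
    (∫ x in (0:ℝ)..π, ∫ t in x..π, F x t) = ∫ t in (0:ℝ)..π, ∫ x in (0:ℝ)..t, F x t := by
  have hπ : (0:ℝ) ≤ π := Real.pi_pos.le
  set μ : Measure ℝ := volume.restrict (Ioc (0:ℝ) π) with hμ
  set G : ℝ → ℝ → ℂ := fun x t => Set.indicator {p : ℝ × ℝ | p.1 < p.2} (Function.uncurry F) (x, t)
    with hG
  have hS : MeasurableSet {p : ℝ × ℝ | p.1 < p.2} :=
    measurableSet_lt measurable_fst measurable_snd
  -- integrability of G on the product
  have hFi : Integrable (Function.uncurry F) (μ.prod μ) := by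
    rw [hμ, Measure.prod_restrict]
    have h1 : IntegrableOn (Function.uncurry F) (Icc (0:ℝ) π ×ˢ Icc (0:ℝ) π) (volume.prod volume) :=
      hF.continuousOn.integrableOn_compact (isCompact_Icc.prod isCompact_Icc)
    exact h1.mono_set (Set.prod_mono Ioc_subset_Icc_self Ioc_subset_Icc_self)
  have hGi : Integrable (Function.uncurry G) (μ.prod μ) := by
    have : Function.uncurry G = Set.indicator {p : ℝ × ℝ | p.1 < p.2} (Function.uncurry F) := by
      funext p; cases p; rfl
    rw [this]
    exact hFi.indicator hS
  -- inner evaluation in t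
  have hGx : ∀ x : ℝ, G x = Set.indicator (Ioi x) (F x) := by
    intro x; funext t
    by_cases h : x < t <;> simp [hG, Set.indicator, h, Function.uncurry]
  have hGt : ∀ t : ℝ, (fun x => G x t) = Set.indicator (Iio t) (fun x => F x t) := by
    intro t; funext x
    by_cases h : x < t <;> simp [hG, Set.indicator, h, Function.uncurry]
  have hii : ∀ x, IntervalIntegrable (G x) volume 0 π := by
    intro x
    rw [hGx, intervalIntegrable_iff_integrableOn_Ioc_of_le hπ]
    exact ((hF.comp (Continuous.prodMk_right x)).integrableOn_Ioc).indicator measurableSet_Ioi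
  have hiix : ∀ x a b : ℝ, IntervalIntegrable (G x) volume a b := by
    intro x a b
    rw [hGx, intervalIntegrable_iff]
    exact (intervalIntegrable_iff.mp
      ((hF.comp (Continuous.prodMk_right x)).intervalIntegrable a b)).indicator measurableSet_Ioi
  have hiit : ∀ t a b : ℝ, IntervalIntegrable (fun x => G x t) volume a b := by
    intro t a b
    rw [hGt, intervalIntegrable_iff]
    exact (intervalIntegrable_iff.mp
      ((hF.comp (continuous_id.prodMk continuous_const)).intervalIntegrable a b)).indicator
      measurableSet_Iio
  have hinner1 : ∀ x ∈ Icc (0:ℝ) π, (∫ t in (0:ℝ)..π, G x t) = ∫ t in x..π, F x t := by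
    intro x hx
    rw [← integral_add_adjacent_intervals (hiix x 0 x) (hiix x x π)]
    have h1 : (∫ t in (0:ℝ)..x, G x t) = 0 := by
      rw [hGx, integral_of_le hx.1, MeasureTheory.integral_indicator measurableSet_Ioi,
        Measure.restrict_restrict measurableSet_Ioi,
        show Ioi x ∩ Ioc 0 x = ∅ by
          apply Set.eq_empty_iff_forall_notMem.mpr
          intro y hy
          simp only [Set.mem_inter_iff, Set.mem_Ioi, Set.mem_Ioc] at hy
          linarith [hy.1, hy.2.2]]
      simp
    have h2 : (∫ t in x..π, G x t) = ∫ t in x..π, F x t := by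
      rw [hGx, integral_of_le hx.2, integral_of_le hx.2,
        MeasureTheory.integral_indicator measurableSet_Ioi,
        Measure.restrict_restrict measurableSet_Ioi,
        Set.inter_eq_self_of_subset_right Ioc_subset_Ioi_self]
    rw [h1, h2, zero_add]
  have hinner2 : ∀ t ∈ Icc (0:ℝ) π, (∫ x in (0:ℝ)..π, G x t) = ∫ x in (0:ℝ)..t, F x t := by
    intro t ht
    rw [← integral_add_adjacent_intervals (hiit t 0 t) (hiit t t π)]
    have h2 : (∫ x in t..π, G x t) = 0 := by
      rw [hGt, integral_of_le ht.2, MeasureTheory.integral_indicator measurableSet_Iio,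
        Measure.restrict_restrict measurableSet_Iio,
        show Iio t ∩ Ioc t π = ∅ by
          apply Set.eq_empty_iff_forall_notMem.mpr
          intro y hy
          simp only [Set.mem_inter_iff, Set.mem_Iio, Set.mem_Ioc] at hy
          linarith [hy.1, hy.2.1]]
      simp
    have h1 : (∫ x in (0:ℝ)..t, G x t) = ∫ x in (0:ℝ)..t, F x t := by
      rw [hGt, integral_of_le ht.1, integral_of_le ht.1,
        MeasureTheory.integral_indicator measurableSet_Iio,
        Measure.restrict_restrict measurableSet_Iio,
        show Iio t ∩ Ioc 0 t = Ioo 0 t by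
          ext y
          simp only [Set.mem_inter_iff, Set.mem_Iio, Set.mem_Ioc, Set.mem_Ioo]
          constructor
          · rintro ⟨h1, h2, h3⟩; exact ⟨h2, h1⟩
          · rintro ⟨h1, h2⟩; exact ⟨h2, h1, h2.le⟩,
        ← MeasureTheory.integral_Ioc_eq_integral_Ioo]
    rw [h1, h2, add_zero]
  calc (∫ x in (0:ℝ)..π, ∫ t in x..π, F x t)
      = ∫ x in (0:ℝ)..π, ∫ t in (0:ℝ)..π, G x t := by
        refine integral_congr fun x hx => ?_
        rw [uIcc_of_le hπ] at hx
        exact (hinner1 x hx).symm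
    _ = ∫ x, (∫ t, G x t ∂μ) ∂μ := by
        simp_rw [intervalIntegral.integral_of_le hπ]; rfl
    _ = ∫ t, (∫ x, G x t ∂μ) ∂μ := MeasureTheory.integral_integral_swap hGi
    _ = ∫ t in (0:ℝ)..π, ∫ x in (0:ℝ)..π, G x t := by
        simp_rw [intervalIntegral.integral_of_le hπ]; rfl
    _ = ∫ t in (0:ℝ)..π, ∫ x in (0:ℝ)..t, F x t := by
        refine integral_congr fun t ht => ?_
        rw [uIcc_of_le hπ] at ht
        exact hinner2 t ht



noncomputable def TriInt (k : ℝ → ℝ → ℂ) (g f : ℝ → ℂ) : ℂ :=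
  ∫ x in (0:ℝ)..π, (∫ t in (0:ℝ)..x, k x t * g t) * f x

lemma cont_slice {g : ℝ → ℝ → ℂ} (hg : Continuous (Function.uncurry g)) (x : ℝ) :
    Continuous fun t => g x t := hg.comp (Continuous.prodMk_right x)

lemma cont_inner0 {g : ℝ → ℝ → ℂ} (hg : Continuous (Function.uncurry g)) :
    Continuous fun x => ∫ t in (0:ℝ)..x, g x t :=
  intervalIntegral.continuous_parametric_intervalIntegral_of_continuous hg continuous_id

lemma cont_innerx {g : ℝ → ℝ → ℂ} (hg : Continuous (Function.uncurry g)) :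
    Continuous fun x => ∫ t in x..π, g x t := by
  have heq : ∀ x, (∫ t in (0:ℝ)..π, g x t) - (∫ t in (0:ℝ)..x, g x t) = ∫ t in x..π, g x t := by
    intro x
    rw [sub_eq_iff_eq_add', ← intervalIntegral.integral_add_adjacent_intervals
      ((cont_slice hg x).intervalIntegrable 0 x)
      ((cont_slice hg x).intervalIntegrable x π)]
  exact Continuous.congr
    ((intervalIntegral.continuous_parametric_intervalIntegral_of_continuous' hg 0 π).sub
      (cont_inner0 hg)) heq

lemma pullc (c : ℂ) (k : ℝ → ℝ → ℂ) (g f : ℝ → ℂ) :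
    TriInt (fun x t => c * k x t) g f = c * TriInt k g f := by
  unfold TriInt
  rw [← intervalIntegral.integral_const_mul]
  refine integral_congr fun x _ => ?_
  rw [show (fun t => c * k x t * g t) = fun t => c * (k x t * g t) from funext fun t => by ring,
    intervalIntegral.integral_const_mul]
  ring

lemma tri_add (k₁ k₂ : ℝ → ℝ → ℂ) (g f : ℝ → ℂ) (hk₁ : Continuous (Function.uncurry k₁))
    (hk₂ : Continuous (Function.uncurry k₂)) (hg : Continuous g) (hf : Continuous f) :
    TriInt (fun x t => k₁ x t + k₂ x t) g f = TriInt k₁ g f + TriInt k₂ g f := by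
  unfold TriInt
  have c1 : Continuous (Function.uncurry fun x t => k₁ x t * g t) :=
    hk₁.mul (hg.comp continuous_snd)
  have c2 : Continuous (Function.uncurry fun x t => k₂ x t * g t) :=
    hk₂.mul (hg.comp continuous_snd)
  rw [← intervalIntegral.integral_add
    (((cont_inner0 c1).fun_mul hf).intervalIntegrable 0 π)
    (((cont_inner0 c2).fun_mul hf).intervalIntegrable 0 π)]
  refine integral_congr fun x _ => ?_
  rw [← add_mul, ← intervalIntegral.integral_add
    (((cont_slice hk₁ x).fun_mul hg).intervalIntegrable 0 x)
    (((cont_slice hk₂ x).fun_mul hg).intervalIntegrable 0 x)]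
  simp [add_mul]

lemma tri_congr {k₁ k₂ : ℝ → ℝ → ℂ} (g f : ℝ → ℂ) (h : ∀ x t, k₁ x t = k₂ x t) :
    TriInt k₁ g f = TriInt k₂ g f := by
  have : k₁ = k₂ := funext fun x => funext fun t => h x t
  rw [this]


lemma swap_outer (k : ℝ → ℝ → ℂ) (g f : ℝ → ℂ) (hk : Continuous (Function.uncurry k))
    (hg : Continuous g) (hf : Continuous f) :
    (∫ x in (0:ℝ)..π, (∫ t in x..π, k x t * g t) * f x) = TriInt (fun x t => k t x) f g := by
  have hc : Continuous (Function.uncurry fun x t : ℝ => k x t * g t * f x) :=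
    (hk.mul (hg.comp continuous_snd)).mul (hf.comp continuous_fst)
  have h1 : (∫ x in (0:ℝ)..π, (∫ t in x..π, k x t * g t) * f x)
      = ∫ x in (0:ℝ)..π, ∫ t in x..π, k x t * g t * f x := by
    refine integral_congr fun x _ => ?_
    rw [intervalIntegral.integral_mul_const]
  rw [h1, tri_swap _ hc]
  refine integral_congr fun t _ => ?_
  rw [show (fun x => k x t * g t * f x) = fun x => k x t * f x * g t from
      funext fun x => by ring, intervalIntegral.integral_mul_const]

noncomputable def PsiFun (v : ℝ → ℂ) (l : ℂ) : ℂ :=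
  ∫ x in (0:ℝ)..π,
    (∫ t in x..π, Complex.exp (-Complex.I * l * (x - t)) * (starRingEnd ℂ) (v t)) * v x

lemma contc {w : ℝ → ℂ} (hw : Continuous w) : Continuous fun x => (starRingEnd ℂ) (w x) :=
  Complex.continuous_conj.comp hw

lemma cont_exp_ker (μ : ℂ) : Continuous (Function.uncurry fun x t : ℝ =>
    Complex.exp (-Complex.I * μ * ((x : ℂ) - (t : ℂ)))) :=
  Complex.continuous_exp.comp (continuous_const.mul
    ((Complex.continuous_ofReal.comp continuous_fst).sub
      (Complex.continuous_ofReal.comp continuous_snd)))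

lemma cont_exp_ker' (μ : ℂ) : Continuous (Function.uncurry fun x t : ℝ =>
    Complex.exp (-Complex.I * μ * ((t : ℂ) - (x : ℂ)))) :=
  Complex.continuous_exp.comp (continuous_const.mul
    ((Complex.continuous_ofReal.comp continuous_snd).sub
      (Complex.continuous_ofReal.comp continuous_fst)))

lemma cont_cos_ker (l : ℂ) : Continuous (Function.uncurry fun x t : ℝ =>
    Complex.cos (l * ((π : ℂ) / 2 - (x : ℂ) + (t : ℂ)))) :=
  Complex.continuous_cos.comp (continuous_const.mul
    (((continuous_const.sub (Complex.continuous_ofReal.comp continuous_fst)).add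
      (Complex.continuous_ofReal.comp continuous_snd))))

lemma cont_cos_ker' (l : ℂ) : Continuous (Function.uncurry fun x t : ℝ =>
    Complex.cos (l * ((π : ℂ) / 2 - (t : ℂ) + (x : ℂ)))) :=
  Complex.continuous_cos.comp (continuous_const.mul
    (((continuous_const.sub (Complex.continuous_ofReal.comp continuous_snd)).add
      (Complex.continuous_ofReal.comp continuous_fst))))

lemma Phi_eq (w : ℝ → ℂ) (l : ℂ) :
    PhiFun w l = TriInt (fun x t => Complex.exp (-Complex.I * l * ((x : ℂ) - (t : ℂ))))
      (fun t => (starRingEnd ℂ) (w t)) w := rfl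

lemma Psi_swap {w : ℝ → ℂ} (hw : Continuous w) (μ : ℂ) :
    PsiFun w μ = TriInt (fun x t => Complex.exp (-Complex.I * μ * ((t : ℂ) - (x : ℂ))))
      w (fun x => (starRingEnd ℂ) (w x)) := by
  unfold PsiFun
  rw [swap_outer _ _ _ (cont_exp_ker μ) (contc hw) hw]

lemma hsplit {w : ℝ → ℂ} (hw : Continuous w) (l : ℂ) :
    ftilde w l * (starRingEnd ℂ) (ftilde w ((starRingEnd ℂ) l)) = PhiFun w l + PsiFun w l := by
  have hconj : (starRingEnd ℂ) (ftilde w ((starRingEnd ℂ) l))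
      = ∫ t in (0:ℝ)..π, Complex.exp (Complex.I * l * t) * (starRingEnd ℂ) (w t) := by
    unfold ftilde
    have conj_int : ∀ (f : ℝ → ℂ) (a b : ℝ),
        (starRingEnd ℂ) (∫ x in a..b, f x) = ∫ x in a..b, (starRingEnd ℂ) (f x) := by
      intro f a b
      rw [intervalIntegral, intervalIntegral, map_sub, integral_conj, integral_conj]
    rw [conj_int]
    refine integral_congr fun t _ => ?_
    rw [map_mul, ← Complex.exp_conj]
    congr 1
    simp [map_mul, Complex.conj_I]
  rw [hconj]
  have hmul : ftilde w l * (∫ t in (0:ℝ)..π, Complex.exp (Complex.I * l * t) * (starRingEnd ℂ) (w t))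
      = ∫ x in (0:ℝ)..π, Complex.exp (-Complex.I * l * x) * w x *
          (∫ t in (0:ℝ)..π, Complex.exp (Complex.I * l * t) * (starRingEnd ℂ) (w t)) := by
    rw [intervalIntegral.integral_mul_const]; rfl
  rw [hmul]
  unfold PhiFun PsiFun
  have hker : ∀ μ : ℂ, Continuous (Function.uncurry fun x t : ℝ =>
      Complex.exp (-Complex.I * μ * ((x:ℂ) - (t:ℂ))) * (starRingEnd ℂ) (w t)) :=
    fun μ => (cont_exp_ker μ).mul ((contc hw).comp continuous_snd)
  rw [← intervalIntegral.integral_add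
    (((cont_inner0 (hker l)).fun_mul hw).intervalIntegrable 0 π)
    (((cont_innerx (hker l)).fun_mul hw).intervalIntegrable 0 π)]
  refine integral_congr fun x _ => ?_
  have hsplitC : (∫ t in (0:ℝ)..π, Complex.exp (Complex.I * l * t) * (starRingEnd ℂ) (w t))
      = (∫ t in (0:ℝ)..x, Complex.exp (Complex.I * l * t) * (starRingEnd ℂ) (w t))
        + ∫ t in x..π, Complex.exp (Complex.I * l * t) * (starRingEnd ℂ) (w t) := by
    have hct : Continuous fun t : ℝ => Complex.exp (Complex.I * l * t) * (starRingEnd ℂ) (w t) := by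
      have := contc hw
      fun_prop
    rw [intervalIntegral.integral_add_adjacent_intervals
      (hct.intervalIntegrable 0 x) (hct.intervalIntegrable x π)]
  rw [hsplitC]
  have hpull : ∀ a b : ℝ, Complex.exp (-Complex.I * l * x) *
      (∫ t in a..b, Complex.exp (Complex.I * l * t) * (starRingEnd ℂ) (w t))
      = ∫ t in a..b, Complex.exp (-Complex.I * l * ((x:ℂ) - (t:ℂ))) * (starRingEnd ℂ) (w t) := by
    intro a b
    rw [← intervalIntegral.integral_const_mul]
    refine integral_congr fun t _ => ?_
    rw [← mul_assoc, ← Complex.exp_add]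
    congr 2
    ring
  calc Complex.exp (-Complex.I * l * x) * w x *
        ((∫ t in (0:ℝ)..x, Complex.exp (Complex.I * l * t) * (starRingEnd ℂ) (w t))
          + ∫ t in x..π, Complex.exp (Complex.I * l * t) * (starRingEnd ℂ) (w t))
      = (Complex.exp (-Complex.I * l * x) *
          (∫ t in (0:ℝ)..x, Complex.exp (Complex.I * l * t) * (starRingEnd ℂ) (w t))) * w x
        + (Complex.exp (-Complex.I * l * x) *
          (∫ t in x..π, Complex.exp (Complex.I * l * t) * (starRingEnd ℂ) (w t))) * w x := by ring
    _ = _ := by rw [hpull 0 x, hpull x π]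

lemma hRdiff {w : ℝ → ℂ} (hw : Continuous w) (l : ℂ) :
    Rfun w l - Rfun w (-l)
      = (1 - Complex.exp (Complex.I * l * Real.pi)) * PhiFun w l
        - (1 - (Complex.exp (Complex.I * l * Real.pi))⁻¹) * PhiFun w (-l)
        - (1 - (Complex.exp (Complex.I * l * Real.pi))⁻¹) * PsiFun w l
        + (1 - Complex.exp (Complex.I * l * Real.pi)) * PsiFun w (-l) := by
  unfold Rfun
  rw [hsplit hw l, hsplit hw (-l)]
  rw [show -Complex.I * -l * (Real.pi : ℂ) = Complex.I * l * Real.pi by ring,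
    show Complex.I * -l * (Real.pi : ℂ) = -(Complex.I * l * Real.pi) by ring,
    show -Complex.I * l * (Real.pi : ℂ) = -(Complex.I * l * Real.pi) by ring,
    Complex.exp_neg]
  have hE : Complex.exp (Complex.I * l * Real.pi) ≠ 0 := Complex.exp_ne_zero _
  field_simp
  ring

lemma main {w : ℝ → ℂ} (hw : Continuous w) (l : ℂ) (hl : l ≠ 0)
    (hs : Complex.sin (l * Real.pi / 2) ≠ 0) :
    2 * Complex.I * l * ((∫ x in (0:ℝ)..Real.pi, resolventFun w l x * (starRingEnd ℂ) (w x))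
      * Delta0 l) = Rfun w l - Rfun w (-l) := by
  set c := Complex.sin (l * (Real.pi : ℂ) / 2) with hcdef
  have hc : c ≠ 0 := hs
  have hcw := contc hw
  -- pointwise decomposition of the resolvent integrand
  have hy : ∀ x : ℝ, resolventFun w l x * (starRingEnd ℂ) (w x)
      = -(1/(2*l*c)) *
        ((∫ t in (0:ℝ)..x, Complex.cos (l * ((Real.pi:ℂ)/2 - x + t)) * w t)
            * (starRingEnd ℂ) (w x)
          + (∫ t in x..Real.pi, Complex.cos (l * ((Real.pi:ℂ)/2 - t + x)) * w t)
            * (starRingEnd ℂ) (w x)) := by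
    intro x
    unfold resolventFun
    rw [show Complex.sin ((Real.pi:ℂ) * l / 2) = c from by rw [hcdef]; congr 1; ring]
    ring
  simp only [hy]
  rw [intervalIntegral.integral_const_mul]
  have hker1 : Continuous (Function.uncurry fun x t : ℝ =>
      Complex.cos (l * ((Real.pi:ℂ)/2 - (x:ℂ) + (t:ℂ))) * w t) :=
    (cont_cos_ker l).mul (hw.comp continuous_snd)
  have hker2 : Continuous (Function.uncurry fun x t : ℝ =>
      Complex.cos (l * ((Real.pi:ℂ)/2 - (t:ℂ) + (x:ℂ))) * w t) :=
    (cont_cos_ker' l).mul (hw.comp continuous_snd)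
  have hAcont : Continuous fun x : ℝ =>
      (∫ t in (0:ℝ)..x, Complex.cos (l * ((Real.pi:ℂ)/2 - (x:ℂ) + (t:ℂ))) * w t)
        * (starRingEnd ℂ) (w x) :=
    (cont_inner0 hker1).mul hcw
  have hBcont : Continuous fun x : ℝ =>
      (∫ t in x..Real.pi, Complex.cos (l * ((Real.pi:ℂ)/2 - (t:ℂ) + (x:ℂ))) * w t)
        * (starRingEnd ℂ) (w x) :=
    (cont_innerx hker2).mul hcw
  rw [intervalIntegral.integral_add (hAcont.intervalIntegrable 0 Real.pi)
    (hBcont.intervalIntegrable 0 Real.pi)]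
  rw [show Delta0 l = 4 * c ^ 2 from hDelta l]
  rw [hRdiff hw l, Psi_swap hw l, Psi_swap hw (-l),
    Phi_eq w l, Phi_eq w (-l)]
  -- identify A and B₀ with TriInt expressions
  have hAeq : (∫ x in (0:ℝ)..Real.pi,
      (∫ t in (0:ℝ)..x, Complex.cos (l * ((Real.pi:ℂ)/2 - x + t)) * w t)
        * (starRingEnd ℂ) (w x))
      = TriInt (fun x t => Complex.cos (l * ((Real.pi:ℂ)/2 - x + t))) w
          (fun x => (starRingEnd ℂ) (w x)) := rfl
  have hBeq : (∫ x in (0:ℝ)..Real.pi,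
      (∫ t in x..Real.pi, Complex.cos (l * ((Real.pi:ℂ)/2 - t + x)) * w t)
        * (starRingEnd ℂ) (w x))
      = TriInt (fun x t => Complex.cos (l * ((Real.pi:ℂ)/2 - x + t)))
          (fun x => (starRingEnd ℂ) (w x)) w := by
    rw [swap_outer _ _ _ (cont_cos_ker' l) hw hcw]
  rw [hAeq, hBeq]
  set E := Complex.exp (Complex.I * l * Real.pi) with hEdef
  set K := fun x t : ℝ => Complex.cos (l * ((Real.pi:ℂ)/2 - x + t)) with hKdef
  set cw := fun x => (starRingEnd ℂ) (w x) with hcwdef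
  -- the A-side identity
  have hA : (1 - E) * TriInt (fun x t => Complex.exp (-Complex.I * -l * ((t:ℂ) - (x:ℂ)))) w cw
        - (1 - E⁻¹) * TriInt (fun x t => Complex.exp (-Complex.I * l * ((t:ℂ) - (x:ℂ)))) w cw
      = (-4 * Complex.I * c) * TriInt K w cw := by
    have e4 : TriInt (fun x t => Complex.exp (-Complex.I * -l * ((t:ℂ) - (x:ℂ)))) w cw
        = TriInt (fun x t => Complex.exp (-Complex.I * l * ((x:ℂ) - (t:ℂ)))) w cw :=
      tri_congr _ _ fun x t => congrArg Complex.exp (by ring)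
    rw [e4]
    calc (1 - E) * TriInt (fun x t => Complex.exp (-Complex.I * l * ((x:ℂ) - (t:ℂ)))) w cw
        - (1 - E⁻¹) * TriInt (fun x t => Complex.exp (-Complex.I * l * ((t:ℂ) - (x:ℂ)))) w cw
        = (1 - E) * TriInt (fun x t => Complex.exp (-Complex.I * l * ((x:ℂ) - (t:ℂ)))) w cw
          + (-(1 - E⁻¹)) * TriInt (fun x t => Complex.exp (-Complex.I * l * ((t:ℂ) - (x:ℂ)))) w cw := by
          ring
      _ = TriInt (fun x t => (1 - E) * Complex.exp (-Complex.I * l * ((x:ℂ) - (t:ℂ)))) w cw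
          + TriInt (fun x t => (-(1 - E⁻¹)) * Complex.exp (-Complex.I * l * ((t:ℂ) - (x:ℂ)))) w cw := by
          rw [pullc, pullc]
      _ = TriInt (fun x t => (1 - E) * Complex.exp (-Complex.I * l * ((x:ℂ) - (t:ℂ)))
            + (-(1 - E⁻¹)) * Complex.exp (-Complex.I * l * ((t:ℂ) - (x:ℂ)))) w cw :=
          (tri_add _ _ _ _ (continuous_const.fun_mul (cont_exp_ker l))
            (continuous_const.fun_mul (cont_exp_ker' l)) hw hcw).symm
      _ = TriInt (fun x t => (-4 * Complex.I * c) * K x t) w cw := by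
          refine tri_congr _ _ fun x t => ?_
          rw [hEdef, ← Complex.exp_neg, hcdef, hKdef]
          linear_combination - scalar l x t
      _ = (-4 * Complex.I * c) * TriInt K w cw := pullc _ _ _ _
  -- the B-side identity
  have hB : (1 - E) * TriInt (fun x t => Complex.exp (-Complex.I * l * ((x:ℂ) - (t:ℂ)))) cw w
        - (1 - E⁻¹) * TriInt (fun x t => Complex.exp (-Complex.I * -l * ((x:ℂ) - (t:ℂ)))) cw w
      = (-4 * Complex.I * c) * TriInt K cw w := by
    have e2 : TriInt (fun x t => Complex.exp (-Complex.I * -l * ((x:ℂ) - (t:ℂ)))) cw w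
        = TriInt (fun x t => Complex.exp (-Complex.I * l * ((t:ℂ) - (x:ℂ)))) cw w :=
      tri_congr _ _ fun x t => congrArg Complex.exp (by ring)
    rw [e2]
    calc (1 - E) * TriInt (fun x t => Complex.exp (-Complex.I * l * ((x:ℂ) - (t:ℂ)))) cw w
        - (1 - E⁻¹) * TriInt (fun x t => Complex.exp (-Complex.I * l * ((t:ℂ) - (x:ℂ)))) cw w
        = (1 - E) * TriInt (fun x t => Complex.exp (-Complex.I * l * ((x:ℂ) - (t:ℂ)))) cw w
          + (-(1 - E⁻¹)) * TriInt (fun x t => Complex.exp (-Complex.I * l * ((t:ℂ) - (x:ℂ)))) cw w := by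
          ring
      _ = TriInt (fun x t => (1 - E) * Complex.exp (-Complex.I * l * ((x:ℂ) - (t:ℂ)))) cw w
          + TriInt (fun x t => (-(1 - E⁻¹)) * Complex.exp (-Complex.I * l * ((t:ℂ) - (x:ℂ)))) cw w := by
          rw [pullc, pullc]
      _ = TriInt (fun x t => (1 - E) * Complex.exp (-Complex.I * l * ((x:ℂ) - (t:ℂ)))
            + (-(1 - E⁻¹)) * Complex.exp (-Complex.I * l * ((t:ℂ) - (x:ℂ)))) cw w :=
          (tri_add _ _ _ _ (continuous_const.fun_mul (cont_exp_ker l))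
            (continuous_const.fun_mul (cont_exp_ker' l)) hcw hw).symm
      _ = TriInt (fun x t => (-4 * Complex.I * c) * K x t) cw w := by
          refine tri_congr _ _ fun x t => ?_
          rw [hEdef, ← Complex.exp_neg, hcdef, hKdef]
          linear_combination - scalar l x t
      _ = (-4 * Complex.I * c) * TriInt K cw w := pullc _ _ _ _
  have hfin : 2 * Complex.I * l * (-(1/(2*l*c)) *
        (TriInt K w cw + TriInt K cw w) * (4 * c ^ 2))
      = (-4 * Complex.I * c) * TriInt K w cw + (-4 * Complex.I * c) * TriInt K cw w := by
    field_simp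
    ring
  linear_combination hfin - hA - hB

end Aux

theorem stmt14 (v : ℝ → ℂ) (hv : ContinuousOn v (Set.Icc 0 Real.pi))
    (α : ℝ) (l : ℂ) (hl : l ≠ 0) (hs : Complex.sin (l * Real.pi / 2) ≠ 0) :
    (1 + (α : ℂ) * ∫ x in (0:ℝ)..Real.pi, resolventFun v l x * (starRingEnd ℂ) (v x))
        * Delta0 l
      = DeltaA v α l := by
  have hπ : (0:ℝ) ≤ Real.pi := Real.pi_pos.le
  obtain ⟨g, hg⟩ := ContinuousMap.exists_restrict_eq
    (isClosed_Icc : IsClosed (Set.Icc (0:ℝ) Real.pi)) ⟨_, hv.restrict⟩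
  set w : ℝ → ℂ := fun x => g x with hwdef
  have hw : Continuous w := g.continuous
  have hvw : ∀ x ∈ Set.Icc (0:ℝ) Real.pi, w x = v x := by
    intro x hx
    exact ContinuousMap.congr_fun hg ⟨x, hx⟩
  have hmem : ∀ x : ℝ, x ∈ Set.uIcc (0:ℝ) Real.pi → x ∈ Set.Icc (0:ℝ) Real.pi := by
    rw [Set.uIcc_of_le hπ]; exact fun x h => h
  have hmem1 : ∀ {x t : ℝ}, x ∈ Set.Icc (0:ℝ) Real.pi → t ∈ Set.uIcc (0:ℝ) x →
      t ∈ Set.Icc (0:ℝ) Real.pi := by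
    intro x t hx ht
    rw [Set.uIcc_of_le hx.1] at ht
    exact ⟨ht.1, ht.2.trans hx.2⟩
  have hmem2 : ∀ {x t : ℝ}, x ∈ Set.Icc (0:ℝ) Real.pi → t ∈ Set.uIcc x Real.pi →
      t ∈ Set.Icc (0:ℝ) Real.pi := by
    intro x t hx ht
    rw [Set.uIcc_of_le hx.2] at ht
    exact ⟨hx.1.trans ht.1, ht.2⟩
  have hft : ∀ μ : ℂ, ftilde v μ = ftilde w μ := by
    intro μ; unfold ftilde
    refine intervalIntegral.integral_congr fun x hx => ?_
    rw [hvw x (hmem x hx)]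
  have hPhi : ∀ μ : ℂ, PhiFun v μ = PhiFun w μ := by
    intro μ; unfold PhiFun
    refine intervalIntegral.integral_congr fun x hx => ?_
    have hx' := hmem x hx
    rw [hvw x hx']
    congr 1
    refine intervalIntegral.integral_congr fun t ht => ?_
    rw [hvw t (hmem1 hx' ht)]
  have hRv : ∀ μ : ℂ, Rfun v μ = Rfun w μ := by
    intro μ; unfold Rfun; rw [hPhi, hft, hft]
  have hJ : (∫ x in (0:ℝ)..Real.pi, resolventFun v l x * (starRingEnd ℂ) (v x))
      = ∫ x in (0:ℝ)..Real.pi, resolventFun w l x * (starRingEnd ℂ) (w x) := by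
    refine intervalIntegral.integral_congr fun x hx => ?_
    have hx' := hmem x hx
    have h1 : (∫ t in (0:ℝ)..x, Complex.cos (l * ((Real.pi:ℂ)/2 - x + t)) * v t)
        = ∫ t in (0:ℝ)..x, Complex.cos (l * ((Real.pi:ℂ)/2 - x + t)) * w t :=
      intervalIntegral.integral_congr fun t ht => by rw [hvw t (hmem1 hx' ht)]
    have h2 : (∫ t in x..Real.pi, Complex.cos (l * ((Real.pi:ℂ)/2 - t + x)) * v t)
        = ∫ t in x..Real.pi, Complex.cos (l * ((Real.pi:ℂ)/2 - t + x)) * w t :=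
      intervalIntegral.integral_congr fun t ht => by rw [hvw t (hmem2 hx' ht)]
    unfold resolventFun
    rw [h1, h2, hvw x hx']
  have hmain := Aux.main hw l hl hs
  rw [DeltaA, hJ, hRv l, hRv (-l), ← hmain]
  have h2 : (2:ℂ) * Complex.I * l ≠ 0 := by
    simp [Complex.I_ne_zero, hl]
  field_simp
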